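/- Let μ and ν be probability measures on ℝⁿ (with the Borel σ-algebra), let π be a permutation of {1, …, n}, and let φ₁, …, φ_n : ℝ → ℝ be homeomorphisms. Define T : ℝⁿ → ℝⁿ by T(v)_i = φ_{π(i)}(v_{π(i)}) (a coordinate permutation composed with an invertible elementwise transformation). Then the Kullback–Leibler divergence is preserved under pushforward by T: klDiv(T_*μ, T_*ν) = klDiv(μ, ν). In particular, causal influences defined as KL divergences between observational and intervened latent distributions are preserved by all reparametrisations within the CRL equivalence class (permutation composed with elementwise invertible transformation). -/
import Mathlib


open MeasureTheory
open scoped ENNReal Classical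

/-- The Kullback–Leibler divergence `klDiv(μ, ν) = ∫ log (dμ/dν) dμ ∈ [0, ∞]`,
equal to `+∞` when `μ` is not absolutely continuous with respect to `ν` (or the
log-likelihood ratio is not integrable). -/
noncomputable def klDiv {α : Type*} [MeasurableSpace α] (μ ν : Measure α) : ℝ≥0∞ :=
  if μ ≪ ν ∧ Integrable (llr μ ν) μ then ENNReal.ofReal (∫ x, llr μ ν x ∂μ) else ⊤

lemma klDiv_map_equiv {α β : Type*} [MeasurableSpace α] [MeasurableSpace β]
    (e : α ≃ᵐ β) (μ ν : Measure α) [SigmaFinite μ] [SigmaFinite ν] :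
    klDiv (μ.map e) (ν.map e) = klDiv μ ν := by
  have hemb := e.measurableEmbedding
  have hac : μ.map e ≪ ν.map e ↔ μ ≪ ν := by
    constructor
    · intro h
      have h2 := h.map e.symm.measurable
      simpa [Measure.map_map e.symm.measurable e.measurable] using h2
    · exact fun h => hemb.absolutelyContinuous_map h
  by_cases hμν : μ ≪ ν
  · have hll : (fun x => llr (μ.map e) (ν.map e) (e x)) =ᵐ[μ] llr μ ν := by
      filter_upwards [hμν.ae_le (hemb.rnDeriv_map μ ν)] with x hx
      simp [llr, hx]
    have hint : Integrable (llr (μ.map e) (ν.map e)) (μ.map e) ↔ Integrable (llr μ ν) μ := by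
      rw [hemb.integrable_map_iff]
      exact integrable_congr hll
    have hIeq : ∫ x, llr (μ.map e) (ν.map e) x ∂(μ.map e) = ∫ x, llr μ ν x ∂μ := by
      rw [integral_map e.measurable.aemeasurable
        (measurable_llr _ _).aestronglyMeasurable]
      exact integral_congr_ae hll
    simp only [klDiv, hac, hint, hIeq]
  · simp [klDiv, hac, hμν]

/-- **KL divergence — and hence causal influence — is preserved under permutation
composed with elementwise invertible reparametrisation.**
Let `μ, ν` be Borel probability measures on `ℝⁿ`, `π` a permutation of `{1,…,n}` and
`φ₁, …, φ_n : ℝ → ℝ` homeomorphisms. For the map `T(v)_i = φ_{π(i)}(v_{π(i)})`,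
the KL divergence is preserved under pushforward: `klDiv(T_*μ, T_*ν) = klDiv(μ, ν)`. -/
theorem klDiv_map_perm_elementwise
    {n : ℕ} (μ ν : Measure (Fin n → ℝ))
    [IsProbabilityMeasure μ] [IsProbabilityMeasure ν]
    (π : Equiv.Perm (Fin n)) (φ : Fin n → (ℝ ≃ₜ ℝ)) :
    klDiv (Measure.map (fun v : Fin n → ℝ => fun i => φ (π i) (v (π i))) μ)
        (Measure.map (fun v : Fin n → ℝ => fun i => φ (π i) (v (π i))) ν) =
      klDiv μ ν := by
  let e : (Fin n → ℝ) ≃ᵐ (Fin n → ℝ) :=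
    { toFun := fun v i => φ (π i) (v (π i))
      invFun := fun w j => (φ j).symm (w (π.symm j))
      left_inv := fun v => by funext j; simp
      right_inv := fun w => by funext i; simp
      measurable_toFun := by
        exact measurable_pi_lambda _ fun i =>
          (φ (π i)).continuous.measurable.comp (measurable_pi_apply _)
      measurable_invFun := by
        exact measurable_pi_lambda _ fun j =>
          (φ j).symm.continuous.measurable.comp (measurable_pi_apply _) }
  exact klDiv_map_equiv e μ ν
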